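/- For all x ≥ 0 and t ≥ 0, the derivative of the Riccati flow satisfies ϖ(x)² ≤ e^{λt}·∂φ_t(x)/∂x ≤ ϖ², where ϖ := 1 − ϖ₊/ϖ₋ and ϖ(x) := 1 − (max(ϖ₊, x) − ϖ₊)/(max(ϖ₊, x) − ϖ₋). -/

import Mathlib

noncomputable def lam (A R S : ℝ) : ℝ := 2 * Real.sqrt (A ^ 2 + R * S)

noncomputable def wplus (A R S : ℝ) : ℝ := (A + lam A R S / 2) / S

noncomputable def wminus (A R S : ℝ) : ℝ := (A - lam A R S / 2) / S

/-- The closed-form Riccati semigroup `φ_t(x)`. -/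
noncomputable def phi (A R S t x : ℝ) : ℝ :=
  wplus A R S +
    (x - wplus A R S) * ((wplus A R S - wminus A R S) * Real.exp (-(lam A R S) * t)) /
      ((wplus A R S - wminus A R S) * Real.exp (-(lam A R S) * t) +
        (x - wminus A R S) * (1 - Real.exp (-(lam A R S) * t)))

/-- `ϖ = 1 - ϖ₊/ϖ₋`. -/
noncomputable def vpi (A R S : ℝ) : ℝ := 1 - wplus A R S / wminus A R S

/-- `ϖ(x) = 1 - (max(ϖ₊,x) - ϖ₊)/(max(ϖ₊,x) - ϖ₋)`. -/
noncomputable def vpix (A R S x : ℝ) : ℝ :=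
  1 - (max (wplus A R S) x - wplus A R S) / (max (wplus A R S) x - wminus A R S)

theorem riccati_flow_derivative_bounds (A R S : ℝ) (hR : 0 < R) (hS : 0 < S)
    (t x : ℝ) (ht : 0 ≤ t) (hx : 0 ≤ x) :
    vpix A R S x ^ 2 ≤ Real.exp (lam A R S * t) * deriv (fun y => phi A R S t y) x ∧
      Real.exp (lam A R S * t) * deriv (fun y => phi A R S t y) x ≤ vpi A R S ^ 2 := by
  have hRS : 0 < R * S := mul_pos hR hS
  have hsq : |A| < Real.sqrt (A ^ 2 + R * S) := by
    rw [← Real.sqrt_sq_eq_abs]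
    exact Real.sqrt_lt_sqrt (sq_nonneg A) (by linarith)
  have habs := abs_lt.mp hsq
  set s := Real.sqrt (A ^ 2 + R * S) with hs_def
  have hl : lam A R S = 2 * s := rfl
  have ha : 0 < wplus A R S := by
    unfold wplus
    rw [hl]
    apply div_pos (by linarith) hS
  have hb : wminus A R S < 0 := by
    unfold wminus
    rw [hl]
    apply div_neg_of_neg_of_pos (by linarith) hS
  set a := wplus A R S with ha_def
  set b := wminus A R S with hb_def
  have hls : 0 < lam A R S := by rw [hl]; linarith
  set l := lam A R S with hl_def
  set E := Real.exp (-l * t) with hE_def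
  have hE0 : 0 < E := Real.exp_pos _
  have hE1 : E ≤ 1 := by
    calc E ≤ Real.exp 0 := Real.exp_le_exp.mpr (by nlinarith)
      _ = 1 := Real.exp_zero
  set m := max a x with hm_def
  have hma : a ≤ m := le_max_left _ _
  have hmx : x ≤ m := le_max_right _ _
  set D := (a - b) * E + (x - b) * (1 - E) with hD_def
  have hDlb : -b ≤ D := by
    have h1 : 0 ≤ a * E := mul_nonneg ha.le hE0.le
    have h2 : 0 ≤ x * (1 - E) := mul_nonneg hx (by linarith)
    nlinarith
  have hDub : D ≤ m - b := by
    have h1 : 0 ≤ (m - a) * E := mul_nonneg (by linarith) hE0.le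
    have h2 : 0 ≤ (m - x) * (1 - E) := mul_nonneg (by linarith) (by linarith)
    nlinarith
  have hD0 : 0 < D := lt_of_lt_of_le (by linarith) hDlb
  have hfun : (fun y => phi A R S t y) =
      fun y => a + (y - a) * ((a - b) * E) / ((a - b) * E + (y - b) * (1 - E)) := rfl
  have h1 : HasDerivAt (fun y : ℝ => (y - a) * ((a - b) * E)) (1 * ((a - b) * E)) x :=
    ((hasDerivAt_id x).sub_const a).mul_const _
  have h2 : HasDerivAt (fun y : ℝ => (a - b) * E + (y - b) * (1 - E)) (0 + 1 * (1 - E)) x :=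
    (hasDerivAt_const x _).add (((hasDerivAt_id x).sub_const b).mul_const _)
  have h3 := (h1.div h2 (by simpa using hD0.ne')).const_add a
  have hderiv : deriv (fun y => phi A R S t y) x = (a - b) ^ 2 * E / D ^ 2 := by
    rw [hfun, show deriv (fun y => a + (y - a) * ((a - b) * E) / ((a - b) * E + (y - b) * (1 - E))) x = _ from h3.deriv]
    have : ((a - b) * E + (x - b) * (1 - E)) = D := rfl
    rw [hD_def]
    field_simp [show (a - b) * E + (x - b) * (1 - E) ≠ 0 from this ▸ hD0.ne']
    ring
  rw [hderiv]
  have hExp : Real.exp (l * t) * E = 1 := by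
    rw [hE_def, ← Real.exp_add, show l * t + -l * t = 0 by ring, Real.exp_zero]
  have key : Real.exp (l * t) * ((a - b) ^ 2 * E / D ^ 2) = (a - b) ^ 2 / D ^ 2 := by
    calc Real.exp (l * t) * ((a - b) ^ 2 * E / D ^ 2)
        = (a - b) ^ 2 / D ^ 2 * (Real.exp (l * t) * E) := by ring
      _ = (a - b) ^ 2 / D ^ 2 := by rw [hExp, mul_one]
  rw [key]
  have hmb : 0 < m - b := by linarith
  have hvpix : vpix A R S x = (a - b) / (m - b) := by
    unfold vpix
    rw [← ha_def, ← hb_def, ← hm_def]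
    field_simp
    ring
  have hvpi : vpi A R S = (a - b) / (-b) := by
    unfold vpi
    rw [← ha_def, ← hb_def]
    rw [eq_div_iff (by linarith : -b ≠ (0:ℝ))]
    field_simp [hb.ne]
    ring
  clear_value s a b l E m D
  have hbpos : (0:ℝ) < -b := by linarith
  have key1 : D ^ 2 ≤ (m - b) ^ 2 := pow_le_pow_left₀ hD0.le hDub 2
  have key2 : (-b) ^ 2 ≤ D ^ 2 := pow_le_pow_left₀ hbpos.le hDlb 2
  constructor
  · rw [hvpix, div_pow]
    exact div_le_div_of_nonneg_left (sq_nonneg _) (pow_pos hD0 2) key1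
  · rw [hvpi, div_pow]
    exact div_le_div_of_nonneg_left (sq_nonneg _) (pow_pos hbpos 2) key2
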